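/- Let κ be a nonnegative n×m matrix with at least one positive entry in each column. A random microbatch is drawn by: (1) choosing a column j with probability M_j / Σ_h M_h where M_j = max_i κ_{ij}, (2) drawing u uniformly from [0,1], and (3) returning all pairs (i,j) with κ_{ij} ≥ u·M_j. Then the probability that a fixed pair (i,j) with κ_{ij} > 0 is included in the microbatch equals κ_{ij} / Σ_h M_h. -/

import Mathlib

open MeasureTheory

/-- Inclusion probability in a coordinated microbatch: choose column `j'` with
probability `M j' / ∑ h, M h` (`M j = max_i κ i j`), draw `u` uniformly from `[0,1]`,
and include all pairs `(i, j')` with `κ i j' ≥ u * M j'`.  The probability that a fixed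
pair `(i, j)` with `κ i j > 0` is included equals `κ i j / ∑ h, M h`. -/
theorem coo_microbatch_inclusion_probability {n m : ℕ} [NeZero n]
    (κ : Fin n → Fin m → ℝ) (hκ : ∀ i j, 0 ≤ κ i j)
    (M : Fin m → ℝ) (hM : ∀ j, M j = Finset.univ.sup' Finset.univ_nonempty (fun i => κ i j))
    (hMpos : ∀ j, 0 < M j)
    (i : Fin n) (j : Fin m) (hij : 0 < κ i j) :
    ∑ j', (M j' / ∑ h, M h) *
        (volume {u : ℝ | u ∈ Set.Icc (0:ℝ) 1 ∧ j' = j ∧ κ i j ≥ u * M j'}).toReal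
      = κ i j / ∑ h, M h := by
  have hκM : κ i j ≤ M j := by
    rw [hM]
    exact Finset.le_sup' (fun i => κ i j) (Finset.mem_univ i)
  have hratio : κ i j / M j ≤ 1 := (div_le_one (hMpos j)).mpr hκM
  rw [Finset.sum_eq_single j]
  · have hset : {u : ℝ | u ∈ Set.Icc (0:ℝ) 1 ∧ j = j ∧ κ i j ≥ u * M j}
        = Set.Icc (0:ℝ) (κ i j / M j) := by
      ext u
      simp only [Set.mem_setOf_eq, Set.mem_Icc, true_and, ge_iff_le]
      constructor
      · rintro ⟨⟨h0, _⟩, h2⟩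
        exact ⟨h0, (le_div_iff₀ (hMpos j)).mpr h2⟩
      · rintro ⟨h0, h1⟩
        exact ⟨⟨h0, h1.trans hratio⟩, (le_div_iff₀ (hMpos j)).mp h1⟩
    rw [hset, Real.volume_Icc, sub_zero,
      ENNReal.toReal_ofReal (div_nonneg (hκ i j) (hMpos j).le)]
    have hMne : M j ≠ 0 := (hMpos j).ne'
    field_simp
  · intro j' _ hj'
    have : {u : ℝ | u ∈ Set.Icc (0:ℝ) 1 ∧ j' = j ∧ κ i j ≥ u * M j'} = ∅ := by
      ext u; simp [hj']
    rw [this]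
    simp
  · intro h
    exact absurd (Finset.mem_univ j) h
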